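/- Let K ⊆ ℝ^m be a closed convex cone with dual K*, and let C ⊆ ℝ^m be a set invariant under one of the operations x ⊓ y = P_{x-K}(y), x ⊓_* y = P_{x-K*}(y) and under one of the operations x ⊔ y = P_{x+K}(y), x ⊔_* y = P_{x+K*}(y). Then C is invariant under all four operations ⊓, ⊓_*, ⊔, ⊔_*. -/

import Mathlib

open RealInnerProductSpace

noncomputable section

abbrev E (m : ℕ) := EuclideanSpace ℝ (Fin m)

/-- `P` is the metric projection map: for every nonempty closed convex set `D`,
`P D x` lies in `D` and satisfies the variational characterization. -/
def IsProjMap {m : ℕ} (P : Set (E m) → E m → E m) : Prop :=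
  ∀ D : Set (E m), D.Nonempty → IsClosed D → Convex ℝ D →
    ∀ x, P D x ∈ D ∧ ∀ y ∈ D, ⟪P D x - x, P D x - y⟫ ≤ 0

/-- The dual cone of `K`. -/
def dualCone {m : ℕ} (K : Set (E m)) : Set (E m) :=
  {y | ∀ x ∈ K, 0 ≤ ⟪x, y⟫}

/-- `x ⊓ y = P_{x-K} y`. -/
def meet {m : ℕ} (P : Set (E m) → E m → E m) (K : Set (E m)) (x y : E m) : E m :=
  P ((fun k => x - k) '' K) y

/-- `x ⊔ y = P_{x+K} y`. -/
def join {m : ℕ} (P : Set (E m) → E m → E m) (K : Set (E m)) (x y : E m) : E m :=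
  P ((fun k => x + k) '' K) y

/-- `C` is `K`-invariant: closed under `meet` and `join`. -/
def KInv {m : ℕ} (P : Set (E m) → E m → E m) (K C : Set (E m)) : Prop :=
  ∀ x ∈ C, ∀ y ∈ C, meet P K x y ∈ C ∧ join P K x y ∈ C

variable {m : ℕ}

lemma dualCone_zero (K : Set (E m)) : (0 : E m) ∈ dualCone K := by
  intro x _; simp

lemma dualCone_closed (K : Set (E m)) : IsClosed (dualCone K) := by
  have : dualCone K = ⋂ x ∈ K, {y : E m | 0 ≤ ⟪x, y⟫} := by
    ext y; simp [dualCone]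
  rw [this]
  exact isClosed_biInter fun x _ =>
    isClosed_le continuous_const (continuous_const.inner continuous_id)

lemma dualCone_convex (K : Set (E m)) : Convex ℝ (dualCone K) := by
  intro a ha b hb s t hs ht hst v hv
  have := ha v hv; have := hb v hv
  rw [inner_add_right, real_inner_smul_right, real_inner_smul_right]
  positivity

lemma sub_img_nonempty (x : E m) {S : Set (E m)} (h : S.Nonempty) :
    ((fun k => x - k) '' S).Nonempty := h.image _

lemma add_img_nonempty (x : E m) {S : Set (E m)} (h : S.Nonempty) :
    ((fun k => x + k) '' S).Nonempty := h.image _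

lemma sub_img_closed (x : E m) {S : Set (E m)} (h : IsClosed S) :
    IsClosed ((fun k => x - k) '' S) := by
  have : (fun k => x - k) '' S = (fun z => x - z) ⁻¹' S := by
    ext z
    constructor
    · rintro ⟨k, hk, rfl⟩; simpa using hk
    · intro hz; exact ⟨x - z, hz, by module⟩
  rw [this]; exact h.preimage (continuous_const.sub continuous_id)

lemma add_img_closed (x : E m) {S : Set (E m)} (h : IsClosed S) :
    IsClosed ((fun k => x + k) '' S) := by
  have : (fun k => x + k) '' S = (fun z => z - x) ⁻¹' S := by
    ext z
    constructor
    · rintro ⟨k, hk, rfl⟩; simpa using hk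
    · intro hz; exact ⟨z - x, hz, by module⟩
  rw [this]; exact h.preimage (continuous_id.sub continuous_const)

lemma sub_img_convex (x : E m) {S : Set (E m)} (h : Convex ℝ S) :
    Convex ℝ ((fun k => x - k) '' S) := by
  rintro _ ⟨a, ha, rfl⟩ _ ⟨b, hb, rfl⟩ s t hs ht hst
  refine ⟨s • a + t • b, h ha hb hs ht hst, ?_⟩
  have hx : s • x + t • x = x := by rw [← add_smul, hst, one_smul]
  simp only [smul_sub]
  rw [show s • x - s • a + (t • x - t • b) = (s • x + t • x) - (s • a + t • b) by abel, hx]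

lemma add_img_convex (x : E m) {S : Set (E m)} (h : Convex ℝ S) :
    Convex ℝ ((fun k => x + k) '' S) := by
  rintro _ ⟨a, ha, rfl⟩ _ ⟨b, hb, rfl⟩ s t hs ht hst
  refine ⟨s • a + t • b, h ha hb hs ht hst, ?_⟩
  have hx : s • x + t • x = x := by rw [← add_smul, hst, one_smul]
  simp only [smul_add]
  rw [show s • x + s • a + (t • x + t • b) = (s • x + t • x) + (s • a + t • b) by abel, hx]

lemma proj_unique {D : Set (E m)} {x p q : E m}
    (hpm : p ∈ D) (hpv : ∀ y ∈ D, ⟪p - x, p - y⟫ ≤ 0)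
    (hqm : q ∈ D) (hqv : ∀ y ∈ D, ⟪q - x, q - y⟫ ≤ 0) : p = q := by
  have h1 := hpv q hqm
  have h2 := hqv p hpm
  have e : ⟪p - x, p - q⟫ + ⟪q - x, q - p⟫ = ⟪p - q, p - q⟫ := by
    rw [show q - p = -(p - q) by abel, inner_neg_right, ← sub_eq_add_neg,
      ← inner_sub_left, sub_sub_sub_cancel_right]
  have : ⟪p - q, p - q⟫ ≤ 0 := by linarith
  have hz : p - q = 0 := by
    have := real_inner_self_nonneg (x := p - q)
    have h0 : ⟪p - q, p - q⟫ = 0 := le_antisymm ‹_› ‹_›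
    exact inner_self_eq_zero.mp h0
  linear_combination (norm := abel) hz

theorem meet_swap (P : Set (E m) → E m → E m) (hP : IsProjMap P)
    (K : Set (E m)) (hKcl : IsClosed K) (hKconv : Convex ℝ K)
    (hKcone : ∀ t : ℝ, 0 ≤ t → ∀ v ∈ K, t • v ∈ K) (hK0 : (0 : E m) ∈ K)
    (x y : E m) : meet P (dualCone K) x y = meet P K y x := by
  obtain ⟨hpm, hpv⟩ := hP ((fun k => y - k) '' K) (sub_img_nonempty y ⟨0, hK0⟩)
    (sub_img_closed y hKcl) (sub_img_convex y hKconv) x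
  set p := P ((fun k => y - k) '' K) x with hp
  obtain ⟨k, hk, hkeq⟩ := hpm
  -- variational rewritten
  have hvar : ∀ k' ∈ K, ⟪p - x, k' - k⟫ ≤ 0 := by
    intro k' hk'
    have := hpv (y - k') ⟨k', hk', rfl⟩
    have he : p - (y - k') = k' - k := by rw [← hkeq]; dsimp only; abel
    rwa [he] at this
  have hk0 : ⟪p - x, k⟫ = 0 := by
    have h1 := hvar 0 hK0
    have h2 := hvar ((2 : ℝ) • k) (hKcone 2 (by norm_num) k hk)
    rw [show (0 : E m) - k = -k by abel, inner_neg_right] at h1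
    rw [show (2 : ℝ) • k - k = k by module] at h2
    linarith
  have hdual : x - p ∈ dualCone K := by
    intro v hv
    have := hvar v hv
    rw [inner_sub_right, hk0] at this
    rw [show x - p = -(p - x) by abel, inner_neg_right]
    rw [real_inner_comm]
    linarith
  -- p satisfies the characterization of projecting y onto x - K*
  have hmem : p ∈ (fun k => x - k) '' dualCone K := ⟨x - p, hdual, by module⟩
  have hvar2 : ∀ w ∈ (fun k => x - k) '' dualCone K, ⟪p - y, p - w⟫ ≤ 0 := by
    rintro _ ⟨s, hs, rfl⟩
    have h1 : p - y = -k := by rw [← hkeq]; dsimp only; abel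
    have h2 : p - (x - s) = -(x - p) + s := by abel
    rw [h1, h2, inner_neg_left, inner_add_right, inner_neg_right]
    have hks : 0 ≤ ⟪k, s⟫ := hs k hk
    have hkx : ⟪k, x - p⟫ = 0 := by
      rw [real_inner_comm, show x - p = -(p - x) by abel, inner_neg_left, hk0]; ring
    linarith
  obtain ⟨hqm, hqv⟩ := hP ((fun k => x - k) '' dualCone K)
    (sub_img_nonempty x ⟨0, dualCone_zero K⟩) (sub_img_closed x (dualCone_closed K))
    (sub_img_convex x (dualCone_convex K)) y
  exact proj_unique hqm hqv hmem hvar2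

theorem join_swap (P : Set (E m) → E m → E m) (hP : IsProjMap P)
    (K : Set (E m)) (hKcl : IsClosed K) (hKconv : Convex ℝ K)
    (hKcone : ∀ t : ℝ, 0 ≤ t → ∀ v ∈ K, t • v ∈ K) (hK0 : (0 : E m) ∈ K)
    (x y : E m) : join P (dualCone K) x y = join P K y x := by
  obtain ⟨hpm, hpv⟩ := hP ((fun k => y + k) '' K) (add_img_nonempty y ⟨0, hK0⟩)
    (add_img_closed y hKcl) (add_img_convex y hKconv) x
  set p := P ((fun k => y + k) '' K) x with hp
  obtain ⟨k, hk, hkeq⟩ := hpm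
  have hvar : ∀ k' ∈ K, ⟪p - x, k - k'⟫ ≤ 0 := by
    intro k' hk'
    have := hpv (y + k') ⟨k', hk', rfl⟩
    have he : p - (y + k') = k - k' := by rw [← hkeq]; dsimp only; abel
    rwa [he] at this
  have hk0 : ⟪p - x, k⟫ = 0 := by
    have h1 := hvar 0 hK0
    have h2 := hvar ((2 : ℝ) • k) (hKcone 2 (by norm_num) k hk)
    rw [show k - (0 : E m) = k by abel] at h1
    rw [show k - (2 : ℝ) • k = -k by module, inner_neg_right] at h2
    linarith
  have hdual : p - x ∈ dualCone K := by
    intro v hv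
    have := hvar v hv
    rw [inner_sub_right, hk0] at this
    rw [real_inner_comm]
    linarith
  have hmem : p ∈ (fun k => x + k) '' dualCone K := ⟨p - x, hdual, by module⟩
  have hvar2 : ∀ w ∈ (fun k => x + k) '' dualCone K, ⟪p - y, p - w⟫ ≤ 0 := by
    rintro _ ⟨s, hs, rfl⟩
    have h1 : p - y = k := by rw [← hkeq]; module
    have h2 : p - (x + s) = (p - x) - s := by abel
    rw [h1, h2, inner_sub_right]
    have hks : 0 ≤ ⟪k, s⟫ := hs k hk
    have hkx : ⟪k, p - x⟫ = 0 := by rw [real_inner_comm]; exact hk0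
    linarith
  obtain ⟨hqm, hqv⟩ := hP ((fun k => x + k) '' dualCone K)
    (add_img_nonempty x ⟨0, dualCone_zero K⟩) (add_img_closed x (dualCone_closed K))
    (add_img_convex x (dualCone_convex K)) y
  exact proj_unique hqm hqv hmem hvar2

theorem invariance_two_ops (m : ℕ)
    (P : Set (E m) → E m → E m) (hP : IsProjMap P)
    (K : Set (E m)) (hKcl : IsClosed K) (hKconv : Convex ℝ K)
    (hKcone : ∀ t : ℝ, 0 ≤ t → ∀ v ∈ K, t • v ∈ K) (hK0 : (0 : E m) ∈ K)
    (C : Set (E m))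
    (hMeet : (∀ x ∈ C, ∀ y ∈ C, meet P K x y ∈ C) ∨
      (∀ x ∈ C, ∀ y ∈ C, meet P (dualCone K) x y ∈ C))
    (hJoin : (∀ x ∈ C, ∀ y ∈ C, join P K x y ∈ C) ∨
      (∀ x ∈ C, ∀ y ∈ C, join P (dualCone K) x y ∈ C)) :
    ∀ x ∈ C, ∀ y ∈ C, meet P K x y ∈ C ∧ meet P (dualCone K) x y ∈ C ∧
      join P K x y ∈ C ∧ join P (dualCone K) x y ∈ C := by
  have ms := meet_swap P hP K hKcl hKconv hKcone hK0
  have js := join_swap P hP K hKcl hKconv hKcone hK0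
  intro x hx y hy
  refine ⟨?_, ?_, ?_, ?_⟩
  · rcases hMeet with h | h
    · exact h x hx y hy
    · rw [← ms y x]; exact h y hy x hx
  · rcases hMeet with h | h
    · rw [ms x y]; exact h y hy x hx
    · exact h x hx y hy
  · rcases hJoin with h | h
    · exact h x hx y hy
    · rw [← js y x]; exact h y hy x hx
  · rcases hJoin with h | h
    · rw [js x y]; exact h y hy x hx
    · exact h x hx y hy
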